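/- Suppose s and s̄(x,y) := max_z s(x,y,z) are both differentiable in x, and s satisfies the twist on z-trivial splitting sets condition. Then s̄ satisfies the twist condition: for each x, the map y ↦ D_x s̄(x,y) is injective. -/

import Mathlib

variable {nx : ℕ} {Y Z : Type*}

/-- A set `S ⊆ Y × Z` is a z-trivial splitting set at `x`. -/
def IsZTrivialSplittingSetAt (s : EuclideanSpace ℝ (Fin nx) → Y → Z → ℝ)
    (x : EuclideanSpace ℝ (Fin nx)) (S : Set (Y × Z)) : Prop :=
  ∃ (V : Y → ℝ), (∀ y z, s x y z ≤ V y) ∧ ∀ p ∈ S, s x p.1 p.2 = V p.1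

/-- `s` is twisted on z-trivial splitting sets. -/
def TwistedOnZTrivialSplittingSets (s : EuclideanSpace ℝ (Fin nx) → Y → Z → ℝ) : Prop :=
  ∀ (x : EuclideanSpace ℝ (Fin nx)) (S : Set (Y × Z)), IsZTrivialSplittingSetAt s x S →
    ∀ p ∈ S, ∀ q ∈ S,
      fderiv ℝ (fun x' => s x' p.1 p.2) x = fderiv ℝ (fun x' => s x' q.1 q.2) x → p = q

/-- if s is twisted on z-trivial splitting sets, the reduced surplus
`s̄(x,y) = max_z s(x,y,z)` satisfies the classical twist condition. -/
theorem stmt_9 [TopologicalSpace Y] [TopologicalSpace Z] [CompactSpace Z] [Nonempty Z]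
    (s : EuclideanSpace ℝ (Fin nx) → Y → Z → ℝ)
    (hs : Continuous fun w : EuclideanSpace ℝ (Fin nx) × Y × Z => s w.1 w.2.1 w.2.2)
    (sbar : EuclideanSpace ℝ (Fin nx) → Y → ℝ)
    (hsbar : ∀ x y, sbar x y = ⨆ z : Z, s x y z)
    (hsdiff : ∀ (y : Y) (z : Z), Differentiable ℝ (fun x => s x y z))
    (hsbardiff : ∀ y : Y, Differentiable ℝ (fun x => sbar x y))
    (htwist : TwistedOnZTrivialSplittingSets s) :
    ∀ x : EuclideanSpace ℝ (Fin nx),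
      Function.Injective (fun y => fderiv ℝ (fun x' => sbar x' y) x) := by
  intro x y1 y2 heq
  simp only at heq
  -- continuity in z
  have hcont : ∀ (x' : EuclideanSpace ℝ (Fin nx)) (y : Y),
      Continuous (fun z => s x' y z) := by
    intro x' y
    exact hs.comp (continuous_const.prodMk (continuous_const.prodMk continuous_id))
  -- s x' y z ≤ sbar x' y
  have hle : ∀ (x' : EuclideanSpace ℝ (Fin nx)) (y : Y) (z : Z),
      s x' y z ≤ sbar x' y := by
    intro x' y z
    rw [hsbar]
    exact le_ciSup ((isCompact_range (hcont x' y)).bddAbove) z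
  -- maximizer
  have hmax : ∀ y : Y, ∃ z : Z, sbar x y = s x y z := by
    intro y
    obtain ⟨z, hz⟩ := (isCompact_univ (X := Z)).exists_isMaxOn Set.univ_nonempty
      (hcont x y).continuousOn
    refine ⟨z, le_antisymm ?_ (hle x y z)⟩
    rw [hsbar]
    exact ciSup_le fun z' => hz.2 (Set.mem_univ z')
  obtain ⟨z1, hz1⟩ := hmax y1
  obtain ⟨z2, hz2⟩ := hmax y2
  -- envelope: fderiv sbar = fderiv s at maximizer
  have henv : ∀ (y : Y) (z : Z), sbar x y = s x y z →
      fderiv ℝ (fun x' => sbar x' y) x = fderiv ℝ (fun x' => s x' y z) x := by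
    intro y z hz
    have hmin : IsLocalMin (fun x' => sbar x' y - s x' y z) x := by
      apply Filter.Eventually.of_forall
      intro x'
      have := hle x' y z
      simp only
      rw [hz]
      linarith
    have h0 := hmin.fderiv_eq_zero
    rw [fderiv_fun_sub ((hsbardiff y) x) ((hsdiff y z) x)] at h0
    exact sub_eq_zero.mp h0
  -- splitting set
  set S : Set (Y × Z) := {(y1, z1), (y2, z2)} with hS
  have hsplit : IsZTrivialSplittingSetAt s x S := by
    refine ⟨fun y => sbar x y, fun y z => hle x y z, ?_⟩
    intro p hp
    rcases hp with hp | hp <;> subst hp <;> simp [hz1.symm, hz2.symm]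
  have h := htwist x S hsplit (y1, z1) (by left; rfl) (y2, z2) (by right; rfl)
    (by rw [← henv y1 z1 hz1, ← henv y2 z2 hz2]; exact heq)
  exact congrArg Prod.fst h
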